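/- arXiv:2410.12815 — 2 statements merged into one kernel-verified Lean document; each statement's English description precedes it below -/
import Mathlib

section
/- For every real number α with 0 < α < 1, the series ∑_{j=1}^{∞} (1/(2j)) · C(2j, j) · (α/2)^{2j} converges and its sum equals −log((1 + √(1 − α²))/2), i.e. equals log 2 − log(1 + √(1 − α²)). Here C(2j, j) denotes the central binomial coefficient. -/
open Real

noncomputable def aa (j : ℕ) : ℝ := ((2 * j).choose j : ℝ) / 4 ^ j

lemma aa_zero : aa 0 = 1 := by simp [aa]

lemma aa_nonneg (j : ℕ) : 0 ≤ aa j := div_nonneg (Nat.cast_nonneg _) (by positivity)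

lemma aa_le_one (j : ℕ) : aa j ≤ 1 := by
  rw [aa, div_le_one (by positivity)]
  have h : (2 * j).choose j ≤ 2 ^ (2 * j) := by
    calc (2 * j).choose j ≤ ∑ i ∈ Finset.range (2 * j + 1), (2 * j).choose i :=
          Finset.single_le_sum (fun i _ => Nat.zero_le _) (by simp [Finset.mem_range]; omega)
      _ = 2 ^ (2 * j) := Nat.sum_range_choose _
  calc ((2 * j).choose j : ℝ) ≤ (2 : ℝ) ^ (2 * j) := by exact_mod_cast h
    _ = 4 ^ j := by rw [pow_mul]; norm_num

lemma aa_rec (j : ℕ) : 2 * ((j : ℝ) + 1) * aa (j + 1) = (2 * (j : ℝ) + 1) * aa j := by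
  have h : (j + 1) * (2 * (j + 1)).choose (j + 1) = 2 * (2 * j + 1) * ((2 * j).choose j) := by
    simpa [Nat.centralBinom_eq_two_mul_choose] using Nat.succ_mul_centralBinom_succ j
  have h' : ((j : ℝ) + 1) * ((2 * (j + 1)).choose (j + 1) : ℝ)
      = 2 * (2 * (j : ℝ) + 1) * (((2 * j).choose j : ℕ) : ℝ) := by exact_mod_cast h
  have h4 : (4 : ℝ) ^ j ≠ 0 := by positivity
  simp only [aa, pow_succ]
  field_simp
  linear_combination 2 * h'

noncomputable def cc (j : ℕ) : ℝ := aa j / (2 * (j : ℝ))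

lemma abs_aa (j : ℕ) : |aa j| ≤ 1 := by
  rw [abs_of_nonneg (aa_nonneg j)]; exact aa_le_one j

lemma summable_u {r : ℝ} (h0 : 0 ≤ r) (h1 : r < 1) :
    Summable (fun n : ℕ => (n : ℝ) * r ^ (n - 1)) := by
  rw [← summable_nat_add_iff 1]
  simp only [Nat.add_sub_cancel]
  have h1' : ‖r‖ < 1 := by rwa [Real.norm_eq_abs, abs_of_nonneg h0]
  have := (summable_pow_mul_geometric_of_norm_lt_one 1 h1').add
    (summable_geometric_of_lt_one h0 h1)
  refine this.congr fun n => ?_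
  push_cast
  ring

lemma summable_mul_pow {b : ℕ → ℝ} (hb : ∀ n, |b n| ≤ 1) {y r : ℝ} (hyr : |y| ≤ r) (h1 : r < 1) :
    Summable (fun n : ℕ => b n * y ^ n) := by
  have h0 : 0 ≤ r := le_trans (abs_nonneg y) hyr
  refine Summable.of_norm (Summable.of_nonneg_of_le (fun n => norm_nonneg _) (fun n => ?_)
    (summable_geometric_of_lt_one h0 h1))
  rw [Real.norm_eq_abs, abs_mul, abs_pow]
  calc |b n| * |y| ^ n ≤ 1 * r ^ n := by
        exact mul_le_mul (hb n) (pow_le_pow_left₀ (abs_nonneg y) hyr n) (by positivity) zero_le_one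
    _ = r ^ n := one_mul _

lemma summable_deriv_aux {b : ℕ → ℝ} (hb : ∀ n, |b n| ≤ 1) {y r : ℝ} (hyr : |y| ≤ r) (h1 : r < 1) :
    Summable (fun n : ℕ => b n * ((n : ℝ) * y ^ (n - 1))) := by
  have h0 : 0 ≤ r := le_trans (abs_nonneg y) hyr
  refine Summable.of_norm (Summable.of_nonneg_of_le (fun n => norm_nonneg _) (fun n => ?_)
    (summable_u h0 h1))
  rw [Real.norm_eq_abs, abs_mul, abs_mul, abs_pow, Nat.abs_cast]
  calc |b n| * ((n : ℝ) * |y| ^ (n - 1)) ≤ 1 * ((n : ℝ) * r ^ (n - 1)) := by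
        refine mul_le_mul (hb n) ?_ (by positivity) zero_le_one
        exact mul_le_mul_of_nonneg_left (pow_le_pow_left₀ (abs_nonneg y) hyr _) (Nat.cast_nonneg n)
    _ = (n : ℝ) * r ^ (n - 1) := one_mul _

/-- generating function of central binomial coefficients -/
lemma tsum_aa {x : ℝ} (hx0 : 0 ≤ x) (hx1 : x < 1) :
    ∑' j : ℕ, aa j * x ^ j = 1 / Real.sqrt (1 - x) := by
  set r : ℝ := (x + 1) / 2 with hrdef
  have hr0 : 0 < r := by positivity
  have hr1 : r < 1 := by rw [hrdef]; linarith
  have hxr : x < r := by rw [hrdef]; linarith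
  set t : Set ℝ := Set.Ioo (-r) r with htdef
  have habs : ∀ y ∈ t, |y| ≤ r := fun y hy => le_of_lt (abs_lt.2 ⟨hy.1, hy.2⟩)
  have h0t : (0 : ℝ) ∈ t := ⟨neg_neg_iff_pos.2 hr0, hr0⟩
  have hxt : x ∈ t := ⟨lt_of_lt_of_le (neg_neg_iff_pos.2 hr0) hx0, hxr⟩
  have hu : Summable (fun n : ℕ => (n : ℝ) * r ^ (n - 1)) := summable_u hr0.le hr1
  have hg0 : Summable (fun n : ℕ => aa n * (0 : ℝ) ^ n) :=
    summable_mul_pow abs_aa (by simpa using hr0.le) hr1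
  -- derivative of the sum
  have hD : ∀ y ∈ t, HasDerivAt (fun z => ∑' n : ℕ, aa n * z ^ n)
      (∑' n : ℕ, aa n * ((n : ℝ) * y ^ (n - 1))) y := by
    intro y hy
    refine hasDerivAt_tsum_of_isPreconnected hu isOpen_Ioo isPreconnected_Ioo
      (fun n z _ => (hasDerivAt_pow n z).const_mul (aa n)) (fun n z hz => ?_) h0t hg0 hy
    rw [Real.norm_eq_abs, abs_mul, abs_mul, abs_pow, Nat.abs_cast]
    calc |aa n| * ((n : ℝ) * |z| ^ (n - 1)) ≤ 1 * ((n : ℝ) * r ^ (n - 1)) := by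
          refine mul_le_mul (abs_aa n) ?_ (by positivity) zero_le_one
          exact mul_le_mul_of_nonneg_left (pow_le_pow_left₀ (abs_nonneg z) (habs z hz) _)
            (Nat.cast_nonneg n)
      _ = (n : ℝ) * r ^ (n - 1) := one_mul _
  -- key algebraic identity for the derivative
  have key : ∀ y ∈ t, 2 * (1 - y) * (∑' n : ℕ, aa n * ((n : ℝ) * y ^ (n - 1)))
      = ∑' n : ℕ, aa n * y ^ n := by
    intro y hy
    have hyr := habs y hy
    have hsf : Summable (fun n : ℕ => 2 * ((n : ℝ) * aa n) * y ^ (n - 1)) := by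
      have := (summable_deriv_aux abs_aa hyr hr1).mul_left 2
      refine this.congr fun n => ?_; ring
    have hsh : Summable (fun n : ℕ => 2 * ((n : ℝ) * aa n) * y ^ n) := by
      have h2 : Summable (fun n : ℕ => (2 * (aa n * ((n:ℝ) * y ^ (n-1)))) * y) :=
        ((summable_deriv_aux abs_aa hyr hr1).mul_left 2).mul_right y
      refine h2.congr fun n => ?_
      cases n with
      | zero => simp
      | succ m => simp only [Nat.add_sub_cancel]; ring
    have hstep : (fun n : ℕ => 2 * (1 - y) * (aa n * ((n : ℝ) * y ^ (n - 1))))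
        = fun n : ℕ => 2 * ((n : ℝ) * aa n) * y ^ (n - 1) - 2 * ((n : ℝ) * aa n) * y ^ n := by
      funext n
      cases n with
      | zero => simp
      | succ m =>
        simp only [Nat.add_sub_cancel, pow_succ]
        push_cast; ring
    rw [← tsum_mul_left, hstep, hsf.tsum_sub hsh]
    have hshift : ∑' n : ℕ, 2 * ((n : ℝ) * aa n) * y ^ (n - 1)
        = ∑' n : ℕ, (2 * (n : ℝ) + 1) * aa n * y ^ n := by
      rw [hsf.tsum_eq_zero_add]
      simp only [Nat.cast_zero, Nat.add_sub_cancel, Nat.cast_add, Nat.cast_one]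
      rw [show (2 : ℝ) * (0 * aa 0) * y ^ (0 - 1) = 0 by simp, zero_add]
      congr 1
      funext n
      have := aa_rec n
      push_cast
      linear_combination y ^ n * this
    rw [hshift]
    have hsum_y : Summable (fun n : ℕ => aa n * y ^ n) := summable_mul_pow abs_aa hyr hr1
    have hsf' : Summable (fun n : ℕ => (2 * (n : ℝ) + 1) * aa n * y ^ n) :=
      (hsh.add hsum_y).congr fun n => by ring
    rw [← hsf'.tsum_sub hsh]
    congr 1; funext n; ring
  -- the function S(y)·√(1-y) is constant on [0, x]
  set φ : ℝ → ℝ := fun z => (∑' n : ℕ, aa n * z ^ n) * Real.sqrt (1 - z) with hφdef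
  have hsub : Set.Icc (0:ℝ) x ⊆ t := fun y hy =>
    ⟨lt_of_lt_of_le (neg_neg_iff_pos.2 hr0) hy.1, lt_of_le_of_lt hy.2 hxr⟩
  have hsqrtD : ∀ y ∈ t, HasDerivAt (fun z => Real.sqrt (1 - z))
      (-(1 / (2 * Real.sqrt (1 - y)))) y := by
    intro y hy
    have hy1 : y < 1 := lt_trans hy.2 hr1
    have h1y : (1 : ℝ) - y ≠ 0 := by linarith
    have h1 : HasDerivAt (fun z : ℝ => 1 - z) (-1) y := by
      simpa using (hasDerivAt_id y).const_sub 1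
    have h2 := (Real.hasDerivAt_sqrt h1y).comp y h1
    exact h2.congr_deriv (by ring)
  have hφD : ∀ y ∈ t, HasDerivAt φ ((∑' n : ℕ, aa n * ((n : ℝ) * y ^ (n - 1))) * Real.sqrt (1 - y)
      + (∑' n : ℕ, aa n * y ^ n) * -(1 / (2 * Real.sqrt (1 - y)))) y :=
    fun y hy => (hD y hy).mul (hsqrtD y hy)
  have hconst : φ x = φ 0 := by
    refine constant_of_has_deriv_right_zero
      (fun y hy => ((hφD y (hsub hy)).continuousAt).continuousWithinAt)
      (fun y hy => ?_) x (Set.right_mem_Icc.2 hx0)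
    have hyt : y ∈ t := hsub ⟨hy.1, hy.2.le⟩
    have hy1 : y < 1 := lt_trans hyt.2 hr1
    have h1y : (0:ℝ) < 1 - y := by linarith
    have hs0 : 0 < Real.sqrt (1 - y) := Real.sqrt_pos.2 h1y
    have hsq : Real.sqrt (1 - y) ^ 2 = 1 - y := Real.sq_sqrt h1y.le
    have hzero : (∑' n : ℕ, aa n * ((n : ℝ) * y ^ (n - 1))) * Real.sqrt (1 - y)
        + (∑' n : ℕ, aa n * y ^ n) * -(1 / (2 * Real.sqrt (1 - y))) = 0 := by
      rw [← key y hyt]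
      field_simp
      linear_combination (∑' (n : ℕ), aa n * (n:ℝ) * y ^ (n - 1)) * hsq
    have := hφD y hyt
    rw [hzero] at this
    exact this.hasDerivWithinAt
  have hφ0 : φ 0 = 1 := by
    have h00 : ∑' n : ℕ, aa n * (0:ℝ) ^ n = 1 := by
      rw [tsum_eq_single 0 (fun n hn => by simp [zero_pow hn])]
      simp [aa_zero]
    simp [hφdef, h00]
  have h1x : (0:ℝ) < 1 - x := by linarith
  have hs0 : 0 < Real.sqrt (1 - x) := Real.sqrt_pos.2 h1x
  rw [eq_div_iff hs0.ne']
  simpa [hφdef] using hconst.trans hφ0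

lemma cc_nonneg (j : ℕ) : 0 ≤ cc j := div_nonneg (aa_nonneg j) (by positivity)

lemma cc_le_one (j : ℕ) : cc j ≤ 1 := by
  cases j with
  | zero => simp [cc]
  | succ m =>
    refine le_trans (div_le_self (aa_nonneg _) ?_) (aa_le_one _)
    push_cast; linarith

lemma abs_cc (j : ℕ) : |cc j| ≤ 1 := by
  rw [abs_of_nonneg (cc_nonneg j)]; exact cc_le_one j

/-- general termwise differentiation for series with bounded coefficients -/
lemma hasDerivAt_tsum_pow {b : ℕ → ℝ} (hb : ∀ n, |b n| ≤ 1) {r : ℝ} (hr0 : 0 < r) (hr1 : r < 1)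
    {y : ℝ} (hy : y ∈ Set.Ioo (-r) r) :
    HasDerivAt (fun z => ∑' n : ℕ, b n * z ^ n)
      (∑' n : ℕ, b n * ((n : ℝ) * y ^ (n - 1))) y := by
  have h0t : (0 : ℝ) ∈ Set.Ioo (-r) r := ⟨neg_neg_iff_pos.2 hr0, hr0⟩
  refine hasDerivAt_tsum_of_isPreconnected (summable_u hr0.le hr1) isOpen_Ioo isPreconnected_Ioo
    (fun n z _ => (hasDerivAt_pow n z).const_mul (b n)) (fun n z hz => ?_) h0t
    (summable_mul_pow hb (by simpa using hr0.le) hr1) hy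
  have hzr : |z| ≤ r := le_of_lt (abs_lt.2 ⟨hz.1, hz.2⟩)
  rw [Real.norm_eq_abs, abs_mul, abs_mul, abs_pow, Nat.abs_cast]
  calc |b n| * ((n : ℝ) * |z| ^ (n - 1)) ≤ 1 * ((n : ℝ) * r ^ (n - 1)) := by
        refine mul_le_mul (hb n) ?_ (by positivity) zero_le_one
        exact mul_le_mul_of_nonneg_left (pow_le_pow_left₀ (abs_nonneg z) hzr _) (Nat.cast_nonneg n)
    _ = (n : ℝ) * r ^ (n - 1) := one_mul _

lemma key2 {y r : ℝ} (hy0 : 0 ≤ y) (hyr : |y| ≤ r) (hr1 : r < 1) :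
    ∑' n : ℕ, cc n * ((n : ℝ) * y ^ (n - 1))
      = 1 / (2 * Real.sqrt (1 - y) * (1 + Real.sqrt (1 - y))) := by
  have hy1 : y < 1 := lt_of_le_of_lt (le_trans (le_abs_self y) hyr) hr1
  have h1y : (0:ℝ) < 1 - y := by linarith
  set s : ℝ := Real.sqrt (1 - y) with hsdef
  have hs0 : 0 < s := Real.sqrt_pos.2 h1y
  have hsq : s ^ 2 = 1 - y := Real.sq_sqrt h1y.le
  have hs1 : s ≤ 1 := by nlinarith [hsq]
  have hDsum : Summable (fun n : ℕ => cc n * ((n : ℝ) * y ^ (n - 1))) :=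
    summable_deriv_aux abs_cc hyr hr1
  have hT : Summable (fun n : ℕ => aa (n + 1) * y ^ n) :=
    summable_mul_pow (fun n => abs_aa (n + 1)) hyr hr1
  set T : ℝ := ∑' n : ℕ, aa (n + 1) * y ^ n with hTdef
  -- the derivative series equals T/2
  have hDf : ∑' n : ℕ, cc n * ((n : ℝ) * y ^ (n - 1)) = (1 / 2) * T := by
    rw [hDsum.tsum_eq_zero_add]
    simp only [Nat.cast_zero, Nat.add_sub_cancel]
    rw [show cc 0 * ((0:ℝ) * y ^ (0 - 1)) = 0 by simp, zero_add]
    rw [hTdef, ← tsum_mul_left]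
    congr 1; funext n
    have hne : ((n : ℝ) + 1) ≠ 0 := by positivity
    simp only [cc]
    push_cast
    field_simp
  -- S y = 1 + y * T
  have hS : (1 : ℝ) / s = 1 + y * T := by
    rw [← tsum_aa hy0 hy1, (summable_mul_pow abs_aa hyr hr1).tsum_eq_zero_add]
    rw [aa_zero, pow_zero, mul_one, hTdef, ← tsum_mul_left]
    congr 1
    exact tsum_congr fun n => by ring
  rcases eq_or_lt_of_le hy0 with hy0' | hy0'
  · -- y = 0
    have hT0 : T = aa 1 := by
      rw [hTdef, ← hy0']
      rw [tsum_eq_single 0 (fun n hn => by simp [zero_pow hn])]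
      simp
    have ha1 : aa 1 = 1 / 2 := by norm_num [aa]
    have hs1' : s = 1 := by rw [hsdef, ← hy0']; simp
    rw [hDf, hT0, ha1, hs1']
    norm_num
  · -- y > 0
    have hs1' : s < 1 := by nlinarith [hsq]
    have hyT : s * y * T = 1 - s := by
      have := hS
      field_simp at this
      linarith [this]
    have hcan : (1 - s) * (s * (1 + s) * T) = (1 - s) * 1 := by
      linear_combination hyT - s * T * hsq
    have hmain : s * (1 + s) * T = 1 :=
      mul_left_cancel₀ (sub_ne_zero.2 (ne_of_gt (by linarith))) hcan
    rw [hDf, eq_div_iff (by positivity)]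
    linear_combination hmain

lemma tsum_cc {x : ℝ} (hx0 : 0 ≤ x) (hx1 : x < 1) :
    ∑' j : ℕ, cc j * x ^ j = -Real.log ((1 + Real.sqrt (1 - x)) / 2) := by
  set r : ℝ := (x + 1) / 2 with hrdef
  have hr0 : 0 < r := by positivity
  have hr1 : r < 1 := by rw [hrdef]; linarith
  have hxr : x < r := by rw [hrdef]; linarith
  have hsub : Set.Icc (0:ℝ) x ⊆ Set.Ioo (-r) r := fun y hy =>
    ⟨lt_of_lt_of_le (neg_neg_iff_pos.2 hr0) hy.1, lt_of_le_of_lt hy.2 hxr⟩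
  set ψ : ℝ → ℝ :=
    fun z => (∑' n : ℕ, cc n * z ^ n) + Real.log ((1 + Real.sqrt (1 - z)) / 2) with hψdef
  have hψD : ∀ y ∈ Set.Icc (0:ℝ) x, HasDerivAt ψ
      ((∑' n : ℕ, cc n * ((n:ℝ) * y ^ (n-1)))
        + (-(1 / (2 * Real.sqrt (1 - y))) / 2) / ((1 + Real.sqrt (1 - y)) / 2)) y := by
    intro y hy
    have hyt := hsub hy
    have hy1 : y < 1 := lt_of_le_of_lt hy.2 hx1
    have h1y : (0:ℝ) < 1 - y := by linarith
    have hsD : HasDerivAt (fun z => Real.sqrt (1 - z)) (-(1 / (2 * Real.sqrt (1 - y)))) y := by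
      have h1 : HasDerivAt (fun z : ℝ => 1 - z) (-1) y := by
        simpa using (hasDerivAt_id y).const_sub 1
      have h2 := (Real.hasDerivAt_sqrt (ne_of_gt h1y)).comp y h1
      exact h2.congr_deriv (by ring)
    have hinner : HasDerivAt (fun z => (1 + Real.sqrt (1 - z)) / 2)
        (-(1 / (2 * Real.sqrt (1 - y))) / 2) y := (hsD.const_add 1).div_const 2
    have hne : (1 + Real.sqrt (1 - y)) / 2 ≠ 0 := by positivity
    exact (hasDerivAt_tsum_pow abs_cc hr0 hr1 hyt).add (hinner.log hne)
  have hconst : ψ x = ψ 0 := by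
    refine constant_of_has_deriv_right_zero
      (fun y hy => ((hψD y hy).continuousAt).continuousWithinAt) (fun y hy => ?_) x
      (Set.right_mem_Icc.2 hx0)
    have hy1 : y < 1 := lt_of_lt_of_le hy.2 hx1.le
    have h1y : (0:ℝ) < 1 - y := by linarith
    have hs0 : 0 < Real.sqrt (1 - y) := Real.sqrt_pos.2 h1y
    have hs1 : 0 < 1 + Real.sqrt (1 - y) := by linarith
    have hsne : Real.sqrt (1 - y) ≠ 0 := hs0.ne'
    have hs1ne : 1 + Real.sqrt (1 - y) ≠ 0 := hs1.ne'
    have hyr : |y| ≤ r := by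
      rw [abs_of_nonneg hy.1]; exact le_of_lt (lt_trans hy.2 hxr)
    have hval := key2 hy.1 hyr hr1
    have hzero : (∑' n : ℕ, cc n * ((n:ℝ) * y ^ (n-1)))
        + (-(1 / (2 * Real.sqrt (1 - y))) / 2) / ((1 + Real.sqrt (1 - y)) / 2) = 0 := by
      rw [hval]
      field_simp
      ring
    have := hψD y ⟨hy.1, hy.2.le⟩
    rw [hzero] at this
    exact this.hasDerivWithinAt
  have hψ0 : ψ 0 = 0 := by
    have h00 : ∑' n : ℕ, cc n * (0:ℝ) ^ n = 0 := by
      rw [tsum_eq_single 0 (fun n hn => by simp [zero_pow hn])]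
      simp [cc]
    simp [hψdef, h00]
  have hfin := hconst.trans hψ0
  simp only [hψdef] at hfin
  linarith [hfin]

/-- The `j = 0` term is `(1/(2·0)) · C(0,0) · (α/2)^0 = 0` in Lean's conventions
(division by zero equals zero), so the sum over `ℕ` equals the sum from `j = 1`. -/
theorem logFSK_central_binomial_series (α : ℝ) (h0 : 0 < α) (h1 : α < 1) :
    HasSum (fun j : ℕ => (1 / (2 * (j : ℝ))) * (Nat.choose (2 * j) j : ℝ) * (α / 2) ^ (2 * j))
      (-Real.log ((1 + Real.sqrt (1 - α ^ 2)) / 2)) ∧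
    -Real.log ((1 + Real.sqrt (1 - α ^ 2)) / 2) =
      Real.log 2 - Real.log (1 + Real.sqrt (1 - α ^ 2)) := by
  have hx0 : (0:ℝ) ≤ α ^ 2 := sq_nonneg α
  have hx1 : α ^ 2 < 1 := pow_lt_one₀ h0.le h1 two_ne_zero
  have hfeq : (fun j : ℕ => (1 / (2 * (j:ℝ))) * ((2*j).choose j : ℝ) * (α/2)^(2*j))
      = fun j : ℕ => cc j * (α^2)^j := by
    funext j
    rw [pow_mul, div_pow]
    simp only [cc, aa]
    rw [div_pow]
    ring
  have habs : |α ^ 2| = α ^ 2 := abs_of_nonneg hx0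
  have hsumm : Summable (fun j : ℕ => cc j * (α^2)^j) :=
    summable_mul_pow abs_cc (le_of_eq habs) hx1
  constructor
  · rw [hfeq]
    have := hsumm.hasSum
    rwa [tsum_cc hx0 hx1] at this
  · have hs : (0:ℝ) < 1 + Real.sqrt (1 - α ^ 2) := by
      have := Real.sqrt_nonneg (1 - α ^ 2); linarith
    rw [Real.log_div hs.ne' (by norm_num)]
    ring
end

section
/- Let r be a real number with |r| < 1 and set a = 2r/(1 + r²), so |a| ≤ 1 and 1 + a·cos θ > 0 for all θ (when |r| < 1). Then for every real θ the series ∑_{i=1}^{∞} ((−1)^{i+1}/i) · r^i · cos(i·θ) converges and log(1 + (2r/(1+r²))·cos θ) = −log(1 + r²) + 2·∑_{i=1}^{∞} ((−1)^{i+1}/i) · r^i · cos(i·θ). -/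
open Real

/-- The `i = 0` term is `((-1)^1 / 0) · r^0 · cos 0 = 0` in Lean's conventions
(division by zero equals zero), so the sum over `ℕ` equals the sum from `i = 1`. -/
theorem logFSK_fourier_series (r : ℝ) (hr : |r| < 1) (θ : ℝ) :
    Summable (fun i : ℕ => ((-1 : ℝ) ^ (i + 1) / (i : ℝ)) * r ^ i * Real.cos ((i : ℝ) * θ)) ∧
    Real.log (1 + (2 * r / (1 + r ^ 2)) * Real.cos θ) =
      -Real.log (1 + r ^ 2) +
        2 * ∑' i : ℕ, ((-1 : ℝ) ^ (i + 1) / (i : ℝ)) * r ^ i * Real.cos ((i : ℝ) * θ) := by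
  set z : ℂ := (r : ℂ) * Complex.exp (θ * Complex.I) with hzdef
  have hz : ‖z‖ < 1 := by
    rw [hzdef, norm_mul, Complex.norm_real, Real.norm_eq_abs,
      Complex.norm_exp]
    simp [hr]
  have H := Complex.hasSum_taylorSeries_log hz
  have Hre : HasSum (fun n : ℕ => ((-1 : ℝ) ^ (n + 1) / (n : ℝ)) * r ^ n *
      Real.cos ((n : ℝ) * θ)) (Complex.log (1 + z)).re := by
    have h2 := H.mapL Complex.reCLM
    convert h2 using 2 with n
    have hzn : z ^ n = ((r ^ n : ℝ) : ℂ) * Complex.exp ((n : ℝ) * θ * Complex.I) := by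
      rw [hzdef, mul_pow, ← Complex.exp_nat_mul]
      push_cast
      ring_nf
    have key : ((-1 : ℂ) ^ (n + 1) * z ^ n / (n : ℂ))
        = ((((-1 : ℝ) ^ (n + 1) / (n : ℝ)) * r ^ n : ℝ) : ℂ) *
          Complex.exp (((n : ℝ) * θ : ℝ) * Complex.I) := by
      rw [hzn]; push_cast; ring
    simp only [Complex.reCLM_apply, key, Complex.re_ofReal_mul,
      Complex.exp_ofReal_mul_I_re]
    exact (Complex.reCLM_apply _).symm
  refine ⟨Hre.summable, ?_⟩
  have hre_val : (Complex.log (1 + z)).re = Real.log ‖1 + z‖ :=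
    Complex.log_re _
  have habs : ‖1 + z‖ ^ 2 = 1 + 2 * r * Real.cos θ + r ^ 2 := by
    rw [Complex.sq_norm, Complex.normSq_apply]
    simp only [hzdef, Complex.add_re, Complex.add_im, Complex.one_re, Complex.one_im,
      Complex.mul_re, Complex.mul_im, Complex.ofReal_re, Complex.ofReal_im,
      Complex.exp_re, Complex.exp_im, Complex.mul_re, Complex.mul_im,
      Complex.I_re, Complex.I_im]
    ring_nf
    simp only [Real.exp_zero, one_pow, mul_one]
    nlinarith [Real.sin_sq_add_cos_sq θ]
  have hpos2 : (0:ℝ) < 1 + 2 * r * Real.cos θ + r ^ 2 := by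
    nlinarith [neg_abs_le (Real.cos θ), abs_nonneg r, Real.abs_cos_le_one θ,
      abs_mul_abs_self r, sq_abs r, mul_le_mul_of_nonneg_left (Real.abs_cos_le_one θ) (abs_nonneg r),
      abs_mul r (Real.cos θ), neg_abs_le (r * Real.cos θ), sq_nonneg (1 - |r|)]
  have hr2pos : (0:ℝ) < 1 + r ^ 2 := by positivity
  have hlog2 : Real.log ‖1 + z‖ =
      Real.log (1 + 2 * r * Real.cos θ + r ^ 2) / 2 := by
    rw [← habs, Real.log_pow]
    push_cast
    ring
  have harg : 1 + (2 * r / (1 + r ^ 2)) * Real.cos θ =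
      (1 + 2 * r * Real.cos θ + r ^ 2) / (1 + r ^ 2) := by
    field_simp; ring
  rw [harg, Real.log_div (ne_of_gt hpos2) (ne_of_gt hr2pos), Hre.tsum_eq, hre_val, hlog2]
  ring
end
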